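/- Let φ : ℝ^N → ℝ be continuously differentiable and let y : [0,∞) → ℝ^N be a differentiable solution of the gradient flow ẏ(t) = −∇φ(y(t)) whose trajectory {y(t) : t ≥ 0} is bounded. Let y_∞ be an accumulation point of the trajectory, i.e. y(t_n) → y_∞ along some sequence t_n → ∞, and assume the Lojasiewicz gradient inequality holds at y_∞: there exist γ ∈ [1/2, 1), C_L > 0 and r > 0 such that |φ(z) − φ(y_∞)|^γ ≤ C_L ‖∇φ(z)‖ whenever ‖z − y_∞‖ < r. Then for every sufficiently small ε ∈ (0, r) there exists T₀ > 0 such that ‖y(t) − y_∞‖ < ε for all t ≥ T₀. -/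

import Mathlib

open Filter

/-- for a bounded gradient-flow trajectory `ẏ = −∇φ(y)` with an accumulation
point `y_∞` at which the Lojasiewicz gradient inequality holds, for every sufficiently
small `ε ∈ (0, r)` there exists `T₀ > 0` such that `‖y(t) − y_∞‖ < ε` for all `t ≥ T₀`. -/
theorem gradient_flow_eventually_trapped {Nn : ℕ}
    (φ : EuclideanSpace ℝ (Fin Nn) → ℝ) (hφ : ContDiff ℝ 1 φ)
    (y y' : ℝ → EuclideanSpace ℝ (Fin Nn))
    (hy : ∀ t, 0 ≤ t → HasDerivAt y (y' t) t)
    (hgf : ∀ t, 0 ≤ t → y' t = -gradient φ (y t))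
    (hbd : ∃ M : ℝ, ∀ t, 0 ≤ t → ‖y t‖ ≤ M)
    (y_inf : EuclideanSpace ℝ (Fin Nn))
    (hacc : ∃ tn : ℕ → ℝ, (∀ k, 0 ≤ tn k) ∧ Tendsto tn atTop atTop ∧
      Tendsto (fun k => y (tn k)) atTop (nhds y_inf))
    (γ C_L r : ℝ) (hγ : γ ∈ Set.Ico (1/2 : ℝ) 1) (hCL : 0 < C_L) (hr : 0 < r)
    (hLoj : ∀ z, ‖z - y_inf‖ < r → |φ z - φ y_inf| ^ γ ≤ C_L * ‖gradient φ z‖) :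
    ∃ ε₀ : ℝ, 0 < ε₀ ∧ ε₀ ≤ r ∧ ∀ ε : ℝ, 0 < ε → ε < ε₀ →
      ∃ T₀ : ℝ, 0 < T₀ ∧ ∀ t, T₀ ≤ t → ‖y t - y_inf‖ < ε := by
  obtain ⟨tn, htn0, htninf, htny⟩ := hacc
  have hγ1 : (0:ℝ) < 1 - γ := by have := hγ.2; linarith
  have hγ0 : (0:ℝ) < γ := by have := hγ.1; linarith
  set φi := φ y_inf with hφidef
  -- derivative of t ↦ φ (y t)
  have hg' : ∀ t, 0 ≤ t → HasDerivAt (fun s => φ (y s)) (-(‖gradient φ (y t)‖^2)) t := by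
    intro t ht
    have hd := (hφ.differentiable one_ne_zero (y t)).hasGradientAt
    have h1 : HasDerivAt (fun s => φ (y s))
        ((inner ℝ (gradient φ (y t)) (y' t) : ℝ)) t := by
      have := hd.hasFDerivAt.comp_hasDerivAt t (hy t ht)
      simpa [Function.comp_def] using this
    rw [hgf t ht] at h1
    have h2 : (inner ℝ (gradient φ (y t)) (-(gradient φ (y t))) : ℝ)
        = -(‖gradient φ (y t)‖^2) := by
      rw [inner_neg_right, real_inner_self_eq_norm_sq]
    exact h2 ▸ h1
  have hycont : ∀ t, 0 ≤ t → ContinuousAt y t := fun t ht => (hy t ht).continuousAt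
  have g_anti : AntitoneOn (fun s => φ (y s)) (Set.Ici 0) := by
    apply antitoneOn_of_deriv_nonpos (convex_Ici 0)
    · exact fun t ht => ((hg' t ht).continuousAt).continuousWithinAt
    · intro t ht
      rw [interior_Ici] at ht
      exact ((hg' t ht.le).differentiableAt).differentiableWithinAt
    · intro t ht
      rw [interior_Ici] at ht
      rw [(hg' t ht.le).deriv]
      simp [sq_nonneg]
  have hglim : Tendsto (fun k => φ (y (tn k))) atTop (nhds φi) :=
    (hφ.continuous.tendsto y_inf).comp htny
  have hlb : ∀ t, 0 ≤ t → φi ≤ φ (y t) := by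
    intro t ht
    refine le_of_tendsto hglim ?_
    filter_upwards [htninf.eventually_ge_atTop t] with k hk
    exact g_anti ht (le_trans ht hk) hk
  by_cases hz : ∃ t₀, 0 ≤ t₀ ∧ φ (y t₀) = φi
  · -- the trajectory reaches the critical level: it is eventually constant equal to y_inf
    obtain ⟨t₀, ht₀, hu0⟩ := hz
    have hconst : ∀ t, t₀ ≤ t → φ (y t) = φi := fun t ht =>
      le_antisymm (hu0 ▸ g_anti ht₀ (ht₀.trans ht) ht) (hlb t (ht₀.trans ht))
    have hgradzero : ∀ t, t₀ < t → gradient φ (y t) = 0 := by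
      intro t ht
      have h1 : HasDerivAt (fun s => φ (y s)) 0 t := by
        refine (hasDerivAt_const t φi).congr_of_eventuallyEq ?_
        filter_upwards [Ioi_mem_nhds ht] with s hs
        exact hconst s hs.le
      have h2 := (hg' t (ht₀.trans ht.le)).unique h1
      have h3 : ‖gradient φ (y t)‖ = 0 := by
        nlinarith [norm_nonneg (gradient φ (y t))]
      simpa using h3
    set a := t₀ + 1 with ha
    have hconst2 : ∀ b, a ≤ b → y b = y a := by
      intro b hb
      have hc := constant_of_has_deriv_right_zero (f := y) (a := a) (b := b)
        (fun s hs => ((hy s (by simp only [Set.mem_Icc] at hs; linarith)).continuousAt).continuousWithinAt)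
        (fun s hs => by
          have hs' : t₀ < s := by simp only [Set.mem_Ico] at hs; linarith
          have hys : y' s = 0 := by rw [hgf s (by linarith), hgradzero s hs', neg_zero]
          have h0 : HasDerivAt y 0 s := hys ▸ hy s (by linarith)
          exact h0.hasDerivWithinAt)
      exact hc b ⟨hb, le_rfl⟩
    have hya : y a = y_inf := by
      have h1 : Tendsto (fun k => y (tn k)) atTop (nhds (y a)) := by
        refine tendsto_const_nhds.congr' ?_
        filter_upwards [htninf.eventually_ge_atTop a] with k hk
        exact (hconst2 (tn k) hk).symm
      exact tendsto_nhds_unique h1 htny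
    refine ⟨r, hr, le_rfl, fun ε hε _ => ⟨a, by linarith, fun t ht => ?_⟩⟩
    rw [hconst2 t ht, hya]
    simpa using hε
  · -- main case : φ (y t) > φi for all t ≥ 0
    push_neg at hz
    have hpos : ∀ t, 0 ≤ t → 0 < φ (y t) - φi := fun t ht =>
      lt_of_le_of_ne (by linarith [hlb t ht]) (fun h => hz t ht (by linarith))
    have hH' : ∀ t, 0 ≤ t → HasDerivAt (fun s => (φ (y s) - φi) ^ (1-γ))
        (-(‖gradient φ (y t)‖^2) * (1-γ) * (φ (y t) - φi) ^ (1-γ-1)) t := by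
      intro t ht
      exact ((hg' t ht).sub_const φi).rpow_const (Or.inl (ne_of_gt (hpos t ht)))
    have hHlim : Tendsto (fun k => (φ (y (tn k)) - φi) ^ (1-γ)) atTop (nhds 0) := by
      have h1 : Tendsto (fun k => φ (y (tn k)) - φi) atTop (nhds 0) := by
        simpa using hglim.sub_const φi
      have h2 : ContinuousAt (fun x : ℝ => x ^ (1-γ)) 0 :=
        Real.continuousAt_rpow_const 0 (1-γ) (Or.inr hγ1.le)
      have h3 := h2.tendsto.comp h1
      simpa [Function.comp_def, Real.zero_rpow (ne_of_gt hγ1)] using h3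
    set κ := (1 - γ) / C_L with hκ
    have hκpos : 0 < κ := div_pos hγ1 hCL
    refine ⟨r, hr, le_rfl, ?_⟩
    intro ε hε hεr
    -- choose the starting time
    obtain ⟨k, hk1, hk2, hk3⟩ : ∃ k, 1 ≤ tn k ∧ ‖y (tn k) - y_inf‖ < ε/2 ∧
        (φ (y (tn k)) - φi) ^ (1-γ) < κ * ε / 2 := by
      have e1 := htninf.eventually_ge_atTop 1
      have e2 : ∀ᶠ k in atTop, ‖y (tn k) - y_inf‖ < ε/2 := by
        have := Metric.tendsto_atTop.mp htny (ε/2) (by linarith)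
        obtain ⟨K, hK⟩ := this
        filter_upwards [eventually_ge_atTop K] with k hk
        simpa [dist_eq_norm] using hK k hk
      have e3 : ∀ᶠ k in atTop, (φ (y (tn k)) - φi) ^ (1-γ) < κ * ε / 2 :=
        hHlim.eventually_lt_const (by positivity)
      exact ((e1.and (e2.and e3)).exists).imp (fun k hk => ⟨hk.1, hk.2.1, hk.2.2⟩)
    have hT0 : (0:ℝ) < tn k := by linarith
    refine ⟨tn k, hT0, ?_⟩
    by_contra hcon
    push_neg at hcon
    obtain ⟨t', ht'T, ht'ε⟩ := hcon
    set A := {t : ℝ | tn k ≤ t ∧ ε ≤ ‖y t - y_inf‖} with hA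
    have hAne : A.Nonempty := ⟨t', ht'T, ht'ε⟩
    have hAbdd : BddBelow A := ⟨tn k, fun x hx => hx.1⟩
    have hmaxcont : Continuous fun t : ℝ => ‖y (max t (tn k)) - y_inf‖ := by
      have h1 : Continuous fun t : ℝ => y (max t (tn k)) := by
        refine continuous_iff_continuousAt.mpr fun t => ?_
        exact ContinuousAt.comp (g := y) (f := fun t : ℝ => max t (tn k))
          (hycont (max t (tn k)) (le_trans hT0.le (le_max_right _ _)))
          ((continuous_id.max continuous_const).continuousAt)
      exact (h1.sub continuous_const).norm
    have hAclosed : IsClosed A := by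
      have heq : A = Set.Ici (tn k) ∩ {t | ε ≤ ‖y (max t (tn k)) - y_inf‖} := by
        ext t
        simp only [hA, Set.mem_setOf_eq, Set.mem_inter_iff, Set.mem_Ici]
        constructor
        · rintro ⟨h1, h2⟩; exact ⟨h1, by rwa [max_eq_left h1]⟩
        · rintro ⟨h1, h2⟩; exact ⟨h1, by rwa [max_eq_left h1] at h2⟩
      rw [heq]
      exact isClosed_Ici.inter (isClosed_le continuous_const hmaxcont)
    set t₁ := sInf A with ht₁def
    have ht₁A : t₁ ∈ A := hAclosed.csInf_mem hAne hAbdd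
    have hTt₁ : tn k ≤ t₁ := ht₁A.1
    have hball : ∀ s, tn k ≤ s → s < t₁ → ‖y s - y_inf‖ < ε := by
      intro s hs1 hs2
      by_contra h
      push_neg at h
      exact absurd (csInf_le hAbdd ⟨hs1, h⟩) (not_le.mpr hs2)
    have hBderiv : ∀ s, 0 ≤ s →
        HasDerivAt (fun t => ((φ (y (tn k)) - φi) ^ (1-γ) - (φ (y t) - φi) ^ (1-γ)) / κ)
          ((0 - (-(‖gradient φ (y s)‖^2) * (1-γ) * (φ (y s) - φi) ^ (1-γ-1))) / κ) s :=
      fun s hs => ((hasDerivAt_const s _).sub (hH' s hs)).div_const κ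
    have key : ‖y t₁ - y (tn k)‖ ≤
        ((φ (y (tn k)) - φi) ^ (1-γ) - (φ (y t₁) - φi) ^ (1-γ)) / κ := by
      refine image_norm_le_of_norm_deriv_right_le_deriv_boundary'
        (f := fun t => y t - y (tn k)) (f' := y') (a := tn k) (b := t₁)
        (B := fun t => ((φ (y (tn k)) - φi) ^ (1-γ) - (φ (y t) - φi) ^ (1-γ)) / κ)
        (B' := fun t => (0 - (-(‖gradient φ (y t)‖^2) * (1-γ) * (φ (y t) - φi) ^ (1-γ-1))) / κ)
        ?_ ?_ ?_ ?_ ?_ ?_ ⟨hTt₁, le_rfl⟩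
      · exact fun s hs =>
          ((hycont s (le_trans hT0.le hs.1)).continuousWithinAt).sub continuousWithinAt_const
      · exact fun x hx => ((hy x (le_trans hT0.le hx.1)).sub_const _).hasDerivWithinAt
      · simp
      · exact fun s hs => (hBderiv s (le_trans hT0.le hs.1)).continuousAt.continuousWithinAt
      · exact fun x hx => (hBderiv x (le_trans hT0.le hx.1)).hasDerivWithinAt
      · intro x hx
        have hx0 : (0:ℝ) ≤ x := le_trans hT0.le hx.1
        have hxr : ‖y x - y_inf‖ < r := lt_trans (hball x hx.1 hx.2) hεr
        have hU : 0 < φ (y x) - φi := hpos x hx0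
        have hLx : (φ (y x) - φi) ^ γ ≤ C_L * ‖gradient φ (y x)‖ := by
          have h := hLoj (y x) hxr
          rwa [abs_of_pos hU] at h
        have hUγ : 0 < (φ (y x) - φi) ^ γ := Real.rpow_pos_of_pos hU γ
        have hG0 : 0 < ‖gradient φ (y x)‖ := by
          rcases (norm_nonneg (gradient φ (y x))).lt_or_eq with h | h
          · exact h
          · exfalso; rw [← h] at hLx; nlinarith
        rw [hgf x hx0, norm_neg]
        beta_reduce
        have hexp : (1:ℝ) - γ - 1 = -γ := by ring
        rw [hexp, Real.rpow_neg hU.le, le_div_iff₀ hκpos, hκ]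
        have hform : (0 : ℝ) - (-(‖gradient φ (y x)‖^2) * (1-γ) * ((φ (y x) - φi) ^ γ)⁻¹)
            = ‖gradient φ (y x)‖^2 * (1-γ) / ((φ (y x) - φi) ^ γ) := by
          rw [div_eq_mul_inv]; ring
        have hform2 : ‖gradient φ (y x)‖ * ((1-γ)/C_L) = ‖gradient φ (y x)‖ * (1-γ) / C_L := by
          ring
        rw [hform, hform2, div_le_div_iff₀ hCL hUγ]
        nlinarith [mul_le_mul_of_nonneg_left hLx (mul_pos hG0 hγ1).le]
    have hH1nonneg : 0 ≤ (φ (y t₁) - φi) ^ (1-γ) :=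
      Real.rpow_nonneg (hpos t₁ (le_trans hT0.le hTt₁)).le _
    have hfin : ‖y t₁ - y (tn k)‖ < ε/2 := by
      have h1 : ((φ (y (tn k)) - φi) ^ (1-γ) - (φ (y t₁) - φi) ^ (1-γ)) / κ < ε/2 := by
        rw [div_lt_iff₀ hκpos]
        nlinarith
      linarith
    have htri := dist_triangle (y t₁) (y (tn k)) y_inf
    simp only [dist_eq_norm] at htri
    have := ht₁A.2
    linarith
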